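/- For every complex s with Re(s) > 1, ∑_{n≥1} a_n(−60)·n^{−s} = 2·(1 + 2^{1−2s} − 2^{1−s})·L(χ_{-15}, s), where a_n(−60) is the 60-periodic sequence defined by: a_n(−60) = 0 if 3∣n or 5∣n; a_n(−60) = 2 if n ≡ 1, 4, 8, 14, 16, 17, 19, 22, 23, 26, 31, 32, 47, 49, 53, or 58 (mod 60); a_n(−60) = −2 if n ≡ 2, 7, 11, 13, 28, 29, 34, 37, 38, 41, 43, 44, 46, 52, 56, or 59 (mod 60). -/

import Mathlib

/-- The quadratic Dirichlet character modulo 3: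
`χ₋₃(n) = 1` if `n ≡ 1 (mod 3)`, `-1` if `n ≡ 2 (mod 3)`, `0` if `3 ∣ n`. -/
def chiNeg3 (n : ℕ) : ℤ :=
  if n % 3 = 1 then 1 else if n % 3 = 2 then -1 else 0

/-- The quadratic Dirichlet character modulo 5 given by the Legendre symbol `(n/5)`. -/
def chi5 (n : ℕ) : ℤ :=
  if n % 5 = 1 ∨ n % 5 = 4 then 1 else if n % 5 = 2 ∨ n % 5 = 3 then -1 else 0

/-- The quadratic Dirichlet character modulo 15, `χ₋₁₅(n) = (n/3)·(n/5)`. -/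
def chiNeg15 (n : ℕ) : ℤ := chiNeg3 n * chi5 n

/-- The Dirichlet `L`-series `L(χ, s) = ∑_{n ≥ 1} χ(n) n^{-s}`. -/
noncomputable def LSer (χ : ℕ → ℤ) (s : ℂ) : ℂ :=
  ∑' n : ℕ, (χ (n + 1) : ℂ) / ((n : ℂ) + 1) ^ s

/-- The 60-periodic sequence `a_n(−60)`: `0` if `3 ∣ n` or `5 ∣ n`; `2` if
`n ≡ 1,4,8,14,16,17,19,22,23,26,31,32,47,49,53,58 (mod 60)`; `−2` if
`n ≡ 2,7,11,13,28,29,34,37,38,41,43,44,46,52,56,59 (mod 60)`. -/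
def a60 (n : ℕ) : ℤ :=
  if 3 ∣ n ∨ 5 ∣ n then 0
  else if n % 60 ∈ ({1, 4, 8, 14, 16, 17, 19, 22, 23, 26, 31, 32, 47, 49, 53, 58} :
      Finset ℕ) then 2
  else if n % 60 ∈ ({2, 7, 11, 13, 28, 29, 34, 37, 38, 41, 43, 44, 46, 52, 56, 59} :
      Finset ℕ) then -2
  else 0

lemma chiNeg15_congr {m n : ℕ} (h : m % 15 = n % 15) : chiNeg15 m = chiNeg15 n := by
  have h3 : m % 3 = n % 3 := by omega
  have h5 : m % 5 = n % 5 := by omega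
  unfold chiNeg15 chiNeg3 chi5
  rw [h3, h5]

lemma chiNeg15_abs_le (n : ℕ) : |chiNeg15 n| ≤ 1 := by
  unfold chiNeg15 chiNeg3 chi5
  split_ifs <;> norm_num

lemma a60_add60 (m : ℕ) : a60 (m + 60) = a60 m := by
  unfold a60
  have h1 : (3 ∣ m + 60 ∨ 5 ∣ m + 60) ↔ (3 ∣ m ∨ 5 ∣ m) := by omega
  rw [Nat.add_mod_right]
  simp only [h1]

lemma a60_key_base : ∀ m < 60, a60 m = 2 * chiNeg15 m
    + (if 4 ∣ m then 4 * chiNeg15 (m / 4) else 0)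
    - (if 2 ∣ m then 4 * chiNeg15 (m / 2) else 0) := by decide

/-- The key pointwise identity. -/
lemma a60_key (m : ℕ) : a60 m = 2 * chiNeg15 m
    + (if 4 ∣ m then 4 * chiNeg15 (m / 4) else 0)
    - (if 2 ∣ m then 4 * chiNeg15 (m / 2) else 0) := by
  induction m using Nat.strong_induction_on with
  | _ m ih =>
    rcases lt_or_ge m 60 with h | h
    · exact a60_key_base m h
    · have ihm := ih (m - 60) (by omega)
      have hm : m = (m - 60) + 60 := by omega
      rw [hm, a60_add60, ihm]
      set k := m - 60 with hk
      have e0 : chiNeg15 (k + 60) = chiNeg15 k := chiNeg15_congr (by omega)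
      have e4 : (if 4 ∣ k + 60 then 4 * chiNeg15 ((k + 60) / 4) else 0)
          = (if 4 ∣ k then 4 * chiNeg15 (k / 4) else 0) := by
        by_cases h4 : 4 ∣ k
        · have h4' : 4 ∣ k + 60 := by omega
          have : chiNeg15 ((k + 60) / 4) = chiNeg15 (k / 4) :=
            chiNeg15_congr (by omega)
          simp [h4, h4', this]
        · have h4' : ¬ 4 ∣ k + 60 := by omega
          simp [h4, h4']
      have e2 : (if 2 ∣ k + 60 then 4 * chiNeg15 ((k + 60) / 2) else 0)
          = (if 2 ∣ k then 4 * chiNeg15 (k / 2) else 0) := by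
        by_cases h2 : 2 ∣ k
        · have h2' : 2 ∣ k + 60 := by omega
          have : chiNeg15 ((k + 60) / 2) = chiNeg15 (k / 2) :=
            chiNeg15_congr (by omega)
          simp [h2, h2', this]
        · have h2' : ¬ 2 ∣ k + 60 := by omega
          simp [h2, h2']
      rw [e0, e4, e2]

/-- For `Re(s) > 1`, `∑_{n ≥ 1} a_n(−60) n^{-s} = 2(1 + 2^{1−2s} − 2^{1−s}) L(χ₋₁₅, s)`. -/
theorem a60_dirichlet_series (s : ℂ) (hs : 1 < s.re) :
    (∑' n : ℕ, (a60 (n + 1) : ℂ) / ((n : ℂ) + 1) ^ s) =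
      2 * (1 + (2 : ℂ) ^ (1 - 2 * s) - (2 : ℂ) ^ (1 - s)) * LSer chiNeg15 s := by
  have hsre : s.re ≠ 0 := by linarith
  have hs0 : s ≠ 0 := fun h => by simp [h] at hsre
  -- general summability helper
  have hsum : ∀ a : ℕ → ℤ, (∀ n, |a n| ≤ 4) →
      Summable (fun n : ℕ => (a n : ℂ) / (n : ℂ) ^ s) := by
    intro a ha
    apply Summable.of_norm_bounded (g := fun n : ℕ => 4 * ((n : ℝ) ^ s.re)⁻¹)
      ((Real.summable_nat_rpow_inv.mpr hs).mul_left 4)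
    intro n
    rcases Nat.eq_zero_or_pos n with rfl | hn
    · simp [Complex.zero_cpow hs0, Real.zero_rpow hsre]
    · rw [norm_div, Complex.norm_natCast_cpow_of_pos hn, div_eq_mul_inv]
      have h1 : ‖((a n : ℤ) : ℂ)‖ ≤ 4 := by
        rw [Complex.norm_intCast]
        exact_mod_cast ha n
      have h2 : (0:ℝ) ≤ ((n : ℝ) ^ s.re)⁻¹ := by positivity
      exact mul_le_mul_of_nonneg_right h1 h2
  have hχ : ∀ n, |chiNeg15 n| ≤ 1 := chiNeg15_abs_le
  -- the three component functions
  set F0 : ℕ → ℂ := fun m => ((2 * chiNeg15 m : ℤ) : ℂ) / (m : ℂ) ^ s with hF0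
  set F4 : ℕ → ℂ := fun m =>
    ((if 4 ∣ m then 4 * chiNeg15 (m / 4) else 0 : ℤ) : ℂ) / (m : ℂ) ^ s with hF4
  set F2 : ℕ → ℂ := fun m =>
    ((if 2 ∣ m then 4 * chiNeg15 (m / 2) else 0 : ℤ) : ℂ) / (m : ℂ) ^ s with hF2
  have sχ : Summable (fun m : ℕ => (chiNeg15 m : ℂ) / (m : ℂ) ^ s) :=
    hsum _ (fun n => (hχ n).trans (by norm_num))
  have sF0 : Summable F0 := hsum _ (fun n => by
    rw [abs_mul]; have := hχ n; simp only [abs_two]; nlinarith [abs_nonneg (chiNeg15 n)])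
  have sF4 : Summable F4 := hsum _ (fun n => by
    split_ifs with h
    · rw [abs_mul]; have := hχ (n / 4); simp only [show |(4:ℤ)| = 4 by norm_num]
      nlinarith [abs_nonneg (chiNeg15 (n / 4))]
    · norm_num)
  have sF2 : Summable F2 := hsum _ (fun n => by
    split_ifs with h
    · rw [abs_mul]; have := hχ (n / 2); simp only [show |(4:ℤ)| = 4 by norm_num]
      nlinarith [abs_nonneg (chiNeg15 (n / 2))]
    · norm_num)
  have sG : Summable (fun m : ℕ => (a60 m : ℂ) / (m : ℂ) ^ s) :=
    hsum _ (fun n => by unfold a60; split_ifs <;> norm_num)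
  -- full L-series over all of ℕ
  have hL : (∑' m : ℕ, (chiNeg15 m : ℂ) / (m : ℂ) ^ s) = LSer chiNeg15 s := by
    rw [Summable.tsum_eq_zero_add sχ]
    have h0 : ((chiNeg15 0 : ℤ) : ℂ) / ((0 : ℕ) : ℂ) ^ s = 0 := by
      norm_num [show chiNeg15 0 = 0 from rfl]
    rw [h0, zero_add, LSer]
    exact tsum_congr fun n => by push_cast; ring_nf
  -- LHS as a sum over all of ℕ
  have hLHS : (∑' n : ℕ, (a60 (n + 1) : ℂ) / ((n : ℂ) + 1) ^ s)
      = ∑' m : ℕ, (a60 m : ℂ) / (m : ℂ) ^ s := by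
    rw [Summable.tsum_eq_zero_add sG]
    have h0 : ((a60 0 : ℤ) : ℂ) / ((0 : ℕ) : ℂ) ^ s = 0 := by
      norm_num [show a60 0 = 0 from rfl]
    rw [h0, zero_add]
    exact tsum_congr fun n => by push_cast; ring_nf
  -- pointwise decomposition
  have hpt : ∀ m : ℕ, (a60 m : ℂ) / (m : ℂ) ^ s = F0 m + F4 m - F2 m := by
    intro m
    rw [hF0, hF4, hF2]
    simp only []
    rw [a60_key m]
    push_cast [apply_ite (fun z : ℤ => (z : ℂ))]
    ring
  -- evaluate the shifted sums
  have h2ne : (2 : ℂ) ^ s ≠ 0 := by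
    simp [Complex.cpow_eq_zero_iff]
  have hF4sum : (∑' m : ℕ, F4 m) = 4 / ((2:ℂ) ^ s * (2:ℂ) ^ s) * LSer chiNeg15 s := by
    have hinj : Function.Injective (fun n : ℕ => 4 * n) := fun a b h => by
      dsimp at h; omega
    have hsupp : Function.support F4 ⊆ Set.range (fun n : ℕ => 4 * n) := by
      intro x hx
      rcases em (4 ∣ x) with ⟨c, rfl⟩ | h
      · exact ⟨c, rfl⟩
      · simp [hF4, h] at hx
    rw [← Function.Injective.tsum_eq hinj hsupp]
    have he : ∀ n : ℕ, F4 (4 * n)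
        = 4 / ((2:ℂ) ^ s * (2:ℂ) ^ s) * ((chiNeg15 n : ℂ) / (n : ℂ) ^ s) := by
      intro n
      have hd : 4 ∣ 4 * n := ⟨n, rfl⟩
      have hq : (4 * n) / 4 = n := by omega
      rw [hF4]
      simp only [hd, if_true, hq]
      have hc : ((4 * n : ℕ) : ℂ) ^ s = ((2:ℕ) : ℂ) ^ s * ((2 * n : ℕ) : ℂ) ^ s := by
        rw [show (4 * n : ℕ) = 2 * (2 * n) by ring, Nat.cast_mul]
        exact Complex.natCast_mul_natCast_cpow 2 (2 * n) s
      have hc2 : ((2 * n : ℕ) : ℂ) ^ s = ((2:ℕ) : ℂ) ^ s * ((n : ℕ) : ℂ) ^ s := by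
        rw [Nat.cast_mul]
        exact Complex.natCast_mul_natCast_cpow 2 n s
      rw [hc, hc2]
      push_cast
      field_simp
    rw [tsum_congr he, tsum_mul_left, hL]
  have hF2sum : (∑' m : ℕ, F2 m) = 4 / (2:ℂ) ^ s * LSer chiNeg15 s := by
    have hinj : Function.Injective (fun n : ℕ => 2 * n) := fun a b h => by
      dsimp at h; omega
    have hsupp : Function.support F2 ⊆ Set.range (fun n : ℕ => 2 * n) := by
      intro x hx
      rcases em (2 ∣ x) with ⟨c, rfl⟩ | h
      · exact ⟨c, rfl⟩
      · simp [hF2, h] at hx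
    rw [← Function.Injective.tsum_eq hinj hsupp]
    have he : ∀ n : ℕ, F2 (2 * n)
        = 4 / (2:ℂ) ^ s * ((chiNeg15 n : ℂ) / (n : ℂ) ^ s) := by
      intro n
      have hd : 2 ∣ 2 * n := ⟨n, rfl⟩
      have hq : (2 * n) / 2 = n := by omega
      rw [hF2]
      simp only [hd, if_true, hq]
      have hc : ((2 * n : ℕ) : ℂ) ^ s = ((2:ℕ) : ℂ) ^ s * ((n : ℕ) : ℂ) ^ s := by
        rw [Nat.cast_mul]
        exact Complex.natCast_mul_natCast_cpow 2 n s
      rw [hc]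
      push_cast
      field_simp
    rw [tsum_congr he, tsum_mul_left, hL]
  have hF0sum : (∑' m : ℕ, F0 m) = 2 * LSer chiNeg15 s := by
    have he : ∀ m : ℕ, F0 m = 2 * ((chiNeg15 m : ℂ) / (m : ℂ) ^ s) := by
      intro m; rw [hF0]; push_cast; ring
    rw [tsum_congr he, tsum_mul_left, hL]
  -- put everything together
  rw [hLHS, tsum_congr hpt, Summable.tsum_sub (sF0.add sF4) sF2, Summable.tsum_add sF0 sF4,
    hF0sum, hF4sum, hF2sum]
  have e12 : (2:ℂ) ^ (1 - 2 * s) = 2 * ((2:ℂ) ^ s)⁻¹ * ((2:ℂ) ^ s)⁻¹ := by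
    rw [show (1 - 2 * s : ℂ) = 1 + (-s + -s) by ring,
      Complex.cpow_add _ _ two_ne_zero, Complex.cpow_add _ _ two_ne_zero,
      Complex.cpow_one, Complex.cpow_neg]
    ring
  have e1 : (2:ℂ) ^ (1 - s) = 2 * ((2:ℂ) ^ s)⁻¹ := by
    rw [show (1 - s : ℂ) = 1 + -s by ring, Complex.cpow_add _ _ two_ne_zero,
      Complex.cpow_one, Complex.cpow_neg]
  rw [e12, e1]
  field_simp
  ring
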